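/- For every positive odd integer n and integer m with 1 ≤ m ≤ (n+1)/2: sum_{k=0}^{n-m} (q^{2m-1};q^2)_k / (q;q)_k * q^{2k} ≡ (-1)^{(n-1)/2 + m - 1} * q^{(n^2-1)/4 - m^2 - m + 1} (mod Phi_n(q)). -/

import Mathlib

open Finset Polynomial

/-- The q-Pochhammer symbol `(a; q)_n` in the field of rational functions. -/
noncomputable def qPoch (a q : RatFunc ℚ) (n : ℕ) : RatFunc ℚ :=
  ∏ j ∈ Finset.range n, (1 - a * q ^ j)

/-- `A ≡ B (mod Φ_n(q)^e)` in the localization of `ℚ[q]` at the n-th cyclotomic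
polynomial. -/
def CongrModCyclo (n e : ℕ) (A B : RatFunc ℚ) : Prop :=
  ∃ u v : Polynomial ℚ, ¬ (Polynomial.cyclotomic n ℚ ∣ v) ∧
    (A - B) * algebraMap (Polynomial ℚ) (RatFunc ℚ) v
      = algebraMap (Polynomial ℚ) (RatFunc ℚ) ((Polynomial.cyclotomic n ℚ) ^ e * u)

noncomputable def q : RatFunc ℚ := RatFunc.X

section Aux

variable {K : Type} [Field K]

noncomputable def auxD (z : K) (j : ℕ) : K := ∏ i ∈ Ico 1 (j+1), (1 - z^i)
noncomputable def auxPA (z : K) (σ k : ℕ) : K := ∏ i ∈ Ico (k+1) (σ+1), (1 + z^i)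
noncomputable def auxT (z : K) (σ k : ℕ) : K :=
  (-1)^k * z^(k*(k-1)) * (auxD z σ / (auxD z k * auxD z (σ-k))) * auxPA z σ k
noncomputable def auxG (z : K) (σ : ℕ) : ℕ → K
  | 0 => 0
  | (j+1) => (-1)^j * z^(j^2) * (auxD z σ / (auxD z j * auxD z (σ-j))) * auxPA z σ j
      * (z^(σ+1) + z^j - z^(j+1))

lemma auxD_succ (z : K) (j : ℕ) : auxD z (j+1) = auxD z j * (1 - z^(j+1)) := by
  rw [auxD, auxD, Finset.prod_Ico_succ_top (by omega)]

lemma auxD_zero (z : K) : auxD z 0 = 1 := by simp [auxD]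

lemma auxD_ne (z : K) (n : ℕ) (hz2 : ∀ i, 0 < i → i < n → z^i ≠ 1) (j : ℕ) (hj : j < n) :
    auxD z j ≠ 0 := by
  refine Finset.prod_ne_zero_iff.mpr (fun i hi => ?_)
  simp only [Finset.mem_Ico] at hi
  exact sub_ne_zero.mpr (Ne.symm (hz2 i hi.1 (by omega)))

lemma auxPA_diag (z : K) (σ : ℕ) : auxPA z σ σ = 1 := by simp [auxPA]

-- per-k telescoping, k = j+1 case
lemma aux_tel_succ (z : K) (n : ℕ) (hz2 : ∀ i, 0 < i → i < n → z^i ≠ 1)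
    (j i : ℕ) (hσ : j + i + 2 < n) :
    auxT z (j+i+2) (j+1) =
      z * auxT z (j+i+1) (j+1) + (auxG z (j+i+1) (j+2) - auxG z (j+i+1) (j+1)) := by
  have hDj : auxD z j ≠ 0 := auxD_ne z n hz2 j (by omega)
  have hDi : auxD z i ≠ 0 := auxD_ne z n hz2 i (by omega)
  have h1a : (1 : K) - z^j * z ≠ 0 := by
    rw [← pow_succ]
    exact sub_ne_zero.mpr (Ne.symm (hz2 (j+1) (by omega) (by omega)))
  have h1c : (1 : K) - z^i * z ≠ 0 := by
    rw [← pow_succ]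
    exact sub_ne_zero.mpr (Ne.symm (hz2 (i+1) (by omega) (by omega)))
  have e1 : j + i + 2 - (j+1) = i + 1 := by omega
  have e2 : j + i + 1 - (j+1) = i := by omega
  have e3 : j + i + 1 - j = i + 1 := by omega
  have e4 : (j+1) * ((j+1) - 1) = j^2 + j := by simp only [Nat.add_sub_cancel]; ring
  simp only [auxT, auxG, e1, e2, e3, e4]
  rw [auxD_succ z j, auxD_succ z i, show j+i+2 = (j+i+1)+1 from rfl, auxD_succ z (j+i+1)]
  rw [show auxPA z ((j+i+1)+1) (j+1) = auxPA z (j+i+1) (j+1) * (1 + z^(j+i+2)) from by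
    rw [auxPA, auxPA, Finset.prod_Ico_succ_top (by omega)]]
  rw [show auxPA z (j+i+1) j = (1 + z^(j+1)) * auxPA z (j+i+1) (j+1) from by
    rw [auxPA, auxPA, Finset.prod_eq_prod_Ico_succ_bot (by omega)]]
  have p1 : z^(j^2+j) = z^(j^2) * z^j := pow_add z _ _
  have p2 : z^((j+1)^2) = z^(j^2) * z^j * z^j * z := by
    rw [show (j+1)^2 = j^2 + j + j + 1 from by ring, pow_add, pow_add, pow_add, pow_one]
  have p3 : z^(j+i+2) = z^j * z^i * (z*z) := by
    rw [show j+i+2 = j + (i + 2) from by ring, pow_add, pow_add]; ring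
  have p4 : z^(j+1) = z^j * z := by rw [pow_add, pow_one]
  have p5 : z^(j+2) = z^j * (z*z) := by rw [pow_add]; ring
  have p6 : z^(i+1) = z^i * z := by rw [pow_add, pow_one]
  have p7 : z^(j+i+1+1) = z^j * z^i * (z*z) := by rw [show j+i+1+1 = j+i+2 from rfl, p3]
  have p8 : z^(j+i+1) = z^j * z^i * z := by
    rw [show j+i+1 = j+(i+1) from rfl, pow_add, pow_add, pow_one, mul_assoc]
  simp only [p1, p2, p3, p4, p5, p6, p7, p8]
  rw [show ((-1:K))^(j+1) = -(-1)^j from by rw [pow_succ]; ring]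
  rw [show auxD z (j+i+1) / (auxD z j * (1-z^j*z) * (auxD z i)) =
        auxD z (j+i+1)*(1-z^i*z) / (auxD z j * (1-z^j*z) * (auxD z i * (1-z^i*z))) from by
        rw [div_eq_div_iff (by exact mul_ne_zero (mul_ne_zero hDj h1a) hDi)
          (by exact mul_ne_zero (mul_ne_zero hDj h1a) (mul_ne_zero hDi h1c))]; ring,
      show auxD z (j+i+1) / (auxD z j * (auxD z i * (1-z^i*z))) =
        auxD z (j+i+1)*(1-z^j*z) / (auxD z j * (1-z^j*z) * (auxD z i * (1-z^i*z))) from by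
        rw [div_eq_div_iff (by exact mul_ne_zero hDj (mul_ne_zero hDi h1c))
          (by exact mul_ne_zero (mul_ne_zero hDj h1a) (mul_ne_zero hDi h1c))]; ring]
  ring

lemma aux_tel_zero (z : K) (n : ℕ) (hz2 : ∀ i, 0 < i → i < n → z^i ≠ 1)
    (σ : ℕ) (hσ : σ + 1 < n) :
    auxT z (σ+1) 0 = z * auxT z σ 0 + (auxG z σ 1 - auxG z σ 0) := by
  have hD1 : auxD z (σ+1) ≠ 0 := auxD_ne z n hz2 _ hσ
  have hD0 : auxD z σ ≠ 0 := auxD_ne z n hz2 _ (by omega)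
  simp only [auxT, auxG, Nat.sub_zero, auxD_zero, pow_zero, one_mul, mul_one,
    Nat.zero_eq, pow_one]
  rw [div_self hD1, div_self hD0]
  rw [show auxPA z (σ+1) 0 = auxPA z σ 0 * (1 + z^(σ+1)) from by
    rw [auxPA, auxPA, Finset.prod_Ico_succ_top (by omega)]]
  ring

lemma aux_key (z : K) (n : ℕ) (hz2 : ∀ i, 0 < i → i < n → z^i ≠ 1) :
    ∀ σ, σ < n → ∑ k ∈ range (σ+1), auxT z σ k = z^σ := by
  intro σ
  induction σ with
  | zero => intro _; simp [auxT, auxD, auxPA]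
  | succ σ IH =>
    intro hσ
    have h0k : ∀ k ∈ range (σ+1), auxT z (σ+1) k
        = z * auxT z σ k + (auxG z σ (k+1) - auxG z σ k) := by
      intro k hk
      simp only [mem_range] at hk
      match k with
      | 0 => exact aux_tel_zero z n hz2 σ hσ
      | (j+1) =>
        obtain ⟨i, rfl⟩ : ∃ i, σ = j + i + 1 := ⟨σ - j - 1, by omega⟩
        exact aux_tel_succ z n hz2 j i (by omega)
    rw [Finset.sum_range_succ, Finset.sum_congr rfl h0k, Finset.sum_add_distrib,
      ← Finset.mul_sum, Finset.sum_range_sub (auxG z σ), IH (by omega)]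
    have hG : auxG z σ (σ+1) = (-1)^σ * z^(σ^2 + σ) := by
      simp only [auxG, Nat.sub_self, auxD_zero, auxPA_diag, mul_one]
      rw [div_self (auxD_ne z n hz2 _ (by omega)), pow_add]
      ring
    have hT : auxT z (σ+1) (σ+1) = (-1)^(σ+1) * z^(σ^2 + σ) := by
      simp only [auxT, Nat.sub_self, auxD_zero, auxPA_diag, mul_one, Nat.add_sub_cancel]
      rw [div_self (auxD_ne z n hz2 _ hσ)]
      rw [show (σ+1) * σ = σ^2 + σ from by ring]
      ring
    rw [hG, hT, auxG, pow_succ, pow_succ]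
    ring

lemma aux_gauss (μ : ℕ) : ∀ r : ℕ, ∑ j ∈ range r, (2*μ+1+2*j) = 2*r*μ + r^2 := by
  intro r
  induction r with
  | zero => simp
  | succ r IH => rw [Finset.sum_range_succ, IH]; ring

lemma aux_main (z : K) (n m s : ℕ) (hm : 1 ≤ m) (hns : n + 1 = 2*m + 2*s)
    (hz1 : z^n = 1) (hz2 : ∀ i, 0 < i → i < n → z^i ≠ 1) :
    (∑ k ∈ range (n-m+1), (∏ j ∈ range k, (1 - z^(2*m-1+2*j))) * z^(2*k) / auxD z k) * z^(s^2)
      = (-1)^s * z^(2*s) := by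
  obtain ⟨μ, rfl⟩ : ∃ μ, m = μ + 1 := ⟨m - 1, by omega⟩
  simp only [show 2*(μ+1)-1 = 2*μ+1 from by omega]
  have hn1 : 1 ≤ n := by omega
  -- step 1 : truncation
  have htr : ∑ k ∈ range (n-(μ+1)+1), (∏ j ∈ range k, (1 - z^(2*μ+1+2*j))) * z^(2*k) / auxD z k
      = ∑ k ∈ range (s+1), (∏ j ∈ range k, (1 - z^(2*μ+1+2*j))) * z^(2*k) / auxD z k := by
    refine (Finset.sum_subset (Finset.range_subset_range.mpr (by omega)) ?_).symm
    intro k hk hk'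
    simp only [mem_range] at hk hk'
    have : (∏ j ∈ range k, (1 - z^(2*μ+1+2*j))) = 0 := by
      refine Finset.prod_eq_zero (Finset.mem_range.mpr (show s < k by omega)) ?_
      rw [show 2*μ+1+2*s = n from by omega, hz1, sub_self]
    rw [this, zero_mul, zero_div]
  rw [htr]
  -- step 2 : reflection
  rw [← Finset.sum_range_reflect]
  simp only [Nat.add_sub_cancel]
  -- step 3 : per-term identity
  rw [Finset.sum_mul]
  have hterm : ∀ k ∈ range (s+1),
      (∏ j ∈ range (s-k), (1 - z^(2*μ+1+2*j))) * z^(2*(s-k)) / auxD z (s-k) * z^(s^2)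
        = (-1)^s * z^s * auxT z s k := by
    intro k hk
    simp only [mem_range] at hk
    obtain ⟨r, hr⟩ : ∃ r, s = k + r := ⟨s - k, by omega⟩
    subst hr
    simp only [Nat.add_sub_cancel_left] at *
    have hDk : auxD z k ≠ 0 := auxD_ne z n hz2 _ (by omega)
    have hDr : auxD z r ≠ 0 := auxD_ne z n hz2 _ (by omega)
    -- rewrite the numerator product
    have h_each : ∀ j ∈ range r, (1 - z^(2*μ+1+2*j))
        = (-1) * z^(2*μ+1+2*j) * (1 - z^(2*((k+r)-j))) := by
      intro j hj
      simp only [mem_range] at hj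
      have hzz : z^(2*μ+1+2*j) * z^(2*((k+r)-j)) = 1 := by
        rw [← pow_add, show 2*μ+1+2*j + 2*((k+r)-j) = n from by omega, hz1]
      linear_combination -hzz
    rw [Finset.prod_congr rfl h_each, Finset.prod_mul_distrib, Finset.prod_mul_distrib,
      Finset.prod_const, Finset.prod_pow_eq_pow_sum, aux_gauss, Finset.card_range]
    -- reindex the remaining product
    have hre : ∏ j ∈ range r, (1 - z^(2*((k+r)-j)))
        = ∏ i ∈ Ico (k+1) (k+r+1), (1 - z^(2*i)) := by
      rw [Finset.prod_Ico_eq_prod_range]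
      simp only [show k+r+1 - (k+1) = r from by omega]
      rw [← Finset.prod_range_reflect (fun j => (1 - z^(2*(k+1+j)))) r]
      refine Finset.prod_congr rfl (fun j hj => ?_)
      simp only [mem_range] at hj
      congr 2
      omega
    rw [hre]
    have hsplit : ∏ i ∈ Ico (k+1) (k+r+1), (1 - z^(2*i))
        = (∏ i ∈ Ico (k+1) (k+r+1), (1 - z^i)) * auxPA z (k+r) k := by
      rw [auxPA, ← Finset.prod_mul_distrib]
      refine Finset.prod_congr rfl (fun i hi => ?_)
      rw [two_mul, pow_add]
      ring
    rw [hsplit]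
    have hDs : auxD z k * (∏ i ∈ Ico (k+1) (k+r+1), (1 - z^i)) = auxD z (k+r) := by
      rw [auxD, auxD, Finset.prod_Ico_consecutive _ (by omega) (by omega)]
    have hexp : 2*r*μ + r^2 + (2*r + (k+r)^2) = k*(k-1) + (k+r) + n*r := by
      have hn' : n = 2*μ+1+2*(k+r) := by omega
      subst hn'
      cases k with
      | zero => simp; ring
      | succ p => simp only [Nat.add_sub_cancel]; ring
    have hpow : z^(2*r*μ + r^2) * (z^(2*r) * z^((k+r)^2)) = z^(k*(k-1)) * z^(k+r) := by
      rw [← pow_add, ← pow_add, hexp, pow_add, pow_add, pow_mul z n r, hz1, one_pow, mul_one]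
    have hkk : ((-1:K))^k * (-1)^k = 1 := by
      rw [← pow_add, Even.neg_one_pow ⟨k, rfl⟩]
    rw [auxT, show k+r-k = r from by omega, ← hDs, mul_div_mul_left _ _ hDk]
    linear_combination ((-1:K)^r * (∏ i ∈ Ico (k+1) (k+r+1), (1-z^i)) * auxPA z (k+r) k
        / auxD z r) * hpow
      - ((-1:K)^r * z^(k*(k-1)) * z^(k+r) * (∏ i ∈ Ico (k+1) (k+r+1), (1-z^i))
        * auxPA z (k+r) k / auxD z r) * hkk
  rw [Finset.sum_congr rfl hterm, ← Finset.mul_sum, aux_key z n hz2 s (by omega),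
    show 2*s = s+s from (two_mul s), pow_add]
  ring

end Aux

theorem qcongruence_thm (n m : ℕ) (hn : Odd n) (hn0 : 0 < n)
    (hm1 : 1 ≤ m) (hm2 : m ≤ (n + 1) / 2) :
    CongrModCyclo n 1
      (∑ k ∈ range (n - m + 1),
        qPoch (q ^ (2 * m - 1)) (q ^ 2) k / qPoch q q k * q ^ (2 * k))
      ((-1) ^ ((n - 1) / 2 + m - 1)
        * q ^ ((((n : ℤ) ^ 2 - 1) / 4) - (m : ℤ) ^ 2 - (m : ℤ) + 1)) := by
  classical
  obtain ⟨t, ht⟩ := hn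
  obtain ⟨s, hns⟩ : ∃ s, n + 1 = 2*m + 2*s := ⟨(n+1)/2 - m, by omega⟩
  haveI : NeZero n := ⟨hn0.ne'⟩
  haveI : NeZero (n : ℚ) := ⟨by exact_mod_cast hn0.ne'⟩
  set np : ℕ+ := ⟨n, hn0⟩ with hnp
  set K := CyclotomicField n ℚ with hK
  haveI : IsCyclotomicExtension {n} ℚ K := CyclotomicField.isCyclotomicExtension n ℚ
  set z : K := IsCyclotomicExtension.zeta n ℚ K with hzdef
  have hζ : IsPrimitiveRoot z n := IsCyclotomicExtension.zeta_spec n ℚ K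
  have hz1 : z^n = 1 := hζ.pow_eq_one
  have hz2 : ∀ i, 0 < i → i < n → z^i ≠ 1 := fun i h h' => hζ.pow_ne_one_of_pos_of_lt h.ne' h'
  have hzne : z ≠ 0 := hζ.ne_zero hn0.ne'
  have hdvd : ∀ p : Polynomial ℚ, (Polynomial.aeval z) p = 0 → Polynomial.cyclotomic n ℚ ∣ p := by
    intro p hp
    rw [Polynomial.cyclotomic_eq_minpoly_rat hζ hn0]
    exact minpoly.dvd ℚ z hp
  have hcyc0 : (Polynomial.aeval z) (Polynomial.cyclotomic n ℚ) = 0 := by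
    rw [Polynomial.cyclotomic_eq_minpoly_rat hζ hn0]; exact minpoly.aeval ℚ z
  set φ := algebraMap (Polynomial ℚ) (RatFunc ℚ) with hφ
  set w : ℕ := (n-1)/2 + m - 1 with hw
  set NP : ℕ → Polynomial ℚ := fun k => ∏ j ∈ range k, (1 - Polynomial.X^(2*m-1+2*j)) with hNP
  set DP : ℕ → Polynomial ℚ := fun k => ∏ i ∈ Ico 1 (k+1), (1 - Polynomial.X^i) with hDP
  set RP : ℕ → Polynomial ℚ := fun k => ∏ i ∈ Ico (k+1) (n-m+1), (1 - Polynomial.X^i) with hRP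
  set P : Polynomial ℚ :=
    Polynomial.X^(s^2+n) * (∑ k ∈ range (n-m+1), NP k * RP k * Polynomial.X^(2*k))
      - (-1)^w * Polynomial.X^(n*s+2*s) * DP (n-m) with hP
  set v : Polynomial ℚ := Polynomial.X^(s^2+n) * DP (n-m) with hv
  have hqX : q = φ Polynomial.X := by rw [hφ, RatFunc.algebraMap_X]; rfl
  have hXne : ∀ i, 1 ≤ i → (1 - Polynomial.X^i : Polynomial ℚ) ≠ 0 := by
    intro i hi h
    have := congrArg (Polynomial.eval 0) h
    simp [zero_pow (by omega : i ≠ 0)] at this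
  have hDPne : ∀ k, DP k ≠ 0 := by
    intro k
    exact Finset.prod_ne_zero_iff.mpr (fun i hi => hXne i (Finset.mem_Ico.mp hi).1)
  have hφDPne : ∀ k, φ (DP k) ≠ 0 := fun k => RatFunc.algebraMap_ne_zero (hDPne k)
  have hqp1 : ∀ k, qPoch (q^(2*m-1)) (q^2) k = φ (NP k) := by
    intro k
    rw [qPoch, hNP, map_prod]
    refine Finset.prod_congr rfl (fun j hj => ?_)
    rw [map_sub, map_one, map_pow, hφ, RatFunc.algebraMap_X, pow_add, pow_mul]
    rfl
  have hqp2 : ∀ k, qPoch q q k = φ (DP k) := by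
    intro k
    rw [qPoch, hDP, map_prod, Finset.prod_Ico_eq_prod_range]
    simp only [Nat.add_sub_cancel]
    refine Finset.prod_congr rfl (fun j hj => ?_)
    rw [map_sub, map_one, map_pow, hφ, RatFunc.algebraMap_X, pow_add, pow_one]
    rfl
  have hDsplit : ∀ k, k ≤ n-m → DP k * RP k = DP (n-m) := by
    intro k hk
    rw [hDP, hRP, Finset.prod_Ico_consecutive _ (by omega) (by omega)]
  have hφv : φ v = q^(s^2+n) * φ (DP (n-m)) := by
    rw [hv, map_mul, map_pow, ← hqX]
  -- Claim 1 : clearing denominators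
  have hA : (∑ k ∈ range (n - m + 1),
        qPoch (q ^ (2 * m - 1)) (q ^ 2) k / qPoch q q k * q ^ (2 * k)) * φ v
      = φ (Polynomial.X^(s^2+n) * (∑ k ∈ range (n-m+1), NP k * RP k * Polynomial.X^(2*k))) := by
    have hR : φ (Polynomial.X^(s^2+n) * (∑ k ∈ range (n-m+1), NP k * RP k * Polynomial.X^(2*k)))
        = ∑ k ∈ range (n-m+1), q^(s^2+n) * (φ (NP k) * φ (RP k) * q^(2*k)) := by
      simp only [map_mul, map_sum, map_pow, Finset.mul_sum]
      exact Finset.sum_congr rfl (fun k _ => by rw [hqX])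
    rw [hR, Finset.sum_mul]
    refine Finset.sum_congr rfl (fun k hk => ?_)
    simp only [Finset.mem_range] at hk
    rw [hqp1, hqp2, hφv]
    have hDRP : φ (DP (n-m)) = φ (DP k) * φ (RP k) := by rw [← map_mul, hDsplit k (by omega)]
    rw [hDRP]
    field_simp [hφDPne k]
  have hqne : q ≠ 0 := RatFunc.X_ne_zero
  have hzpow : q^((((n : ℤ) ^ 2 - 1) / 4) - (m : ℤ) ^ 2 - (m : ℤ) + 1) * q^((s^2+n : ℕ) : ℤ)
      = q^(((n*s+2*s : ℕ) : ℤ)) := by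
    rw [← zpow_add₀ hqne]
    congr 1
    have h4 : ((n:ℤ)^2 - 1) = 4 * (((m:ℤ)+s)*((m:ℤ)+s-1)) := by
      have hnz : (n:ℤ) = 2*m+2*s-1 := by push_cast; omega
      rw [hnz]; ring
    rw [h4, Int.mul_ediv_cancel_left _ (by norm_num)]
    have hnz : (n:ℤ) = 2*m+2*s-1 := by push_cast; omega
    push_cast
    rw [hnz]
    ring
  have hB : ((-1) ^ w * q ^ ((((n : ℤ) ^ 2 - 1) / 4) - (m : ℤ) ^ 2 - (m : ℤ) + 1)) * φ v
      = φ ((-1)^w * Polynomial.X^(n*s+2*s) * DP (n-m)) := by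
    have hR : φ ((-1)^w * Polynomial.X^(n*s+2*s) * DP (n-m))
        = (-1)^w * q^(n*s+2*s) * φ (DP (n-m)) := by
      simp only [map_mul, map_pow, map_neg, map_one]
      rw [hqX]
    rw [hR, hφv]
    rw [show ((-1:RatFunc ℚ)) ^ w * q ^ ((((n : ℤ) ^ 2 - 1) / 4) - (m : ℤ) ^ 2 - (m : ℤ) + 1)
          * (q^(s^2+n) * φ (DP (n-m)))
        = (-1) ^ w * (q ^ ((((n : ℤ) ^ 2 - 1) / 4) - (m : ℤ) ^ 2 - (m : ℤ) + 1)
            * q^((s^2+n : ℕ) : ℤ)) * φ (DP (n-m)) from by rw [zpow_natCast]; ring]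
    rw [hzpow, zpow_natCast]
  have key1 : ((∑ k ∈ range (n - m + 1),
        qPoch (q ^ (2 * m - 1)) (q ^ 2) k / qPoch q q k * q ^ (2 * k))
      - (-1) ^ w * q ^ ((((n : ℤ) ^ 2 - 1) / 4) - (m : ℤ) ^ 2 - (m : ℤ) + 1)) * φ v = φ P := by
    rw [sub_mul, hA, hB, ← map_sub, hP]
  -- Claim 2 : v not divisible
  have key2 : ¬ (Polynomial.cyclotomic n ℚ ∣ v) := by
    intro hdv
    obtain ⟨c, hc⟩ := hdv
    have h0 : (Polynomial.aeval z) v = 0 := by rw [hc, map_mul, hcyc0, zero_mul]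
    have h1 : (Polynomial.aeval z) v ≠ 0 := by
      rw [hv, map_mul, map_pow, Polynomial.aeval_X, hDP, map_prod]
      refine mul_ne_zero (pow_ne_zero _ hzne) (Finset.prod_ne_zero_iff.mpr (fun i hi => ?_))
      simp only [Finset.mem_Ico] at hi
      rw [map_sub, map_one, map_pow, Polynomial.aeval_X]
      exact sub_ne_zero.mpr (Ne.symm (hz2 i hi.1 (by omega)))
    exact h1 h0
  -- Claim 3 : P divisible
  have key3 : Polynomial.cyclotomic n ℚ ∣ P := by
    apply hdvd
    have haev : (Polynomial.aeval z) P
        = z^(s^2+n) * (∑ k ∈ range (n-m+1),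
            (∏ j ∈ range k, (1 - z^(2*m-1+2*j))) * (∏ i ∈ Ico (k+1) (n-m+1), (1 - z^i)) * z^(2*k))
          - (-1)^w * z^(n*s+2*s) * auxD z (n-m) := by
      rw [hP, map_sub, map_mul, map_mul, map_mul, map_pow, map_pow, map_pow, map_neg, map_one,
        Polynomial.aeval_X, map_sum]
      congr 1
      · congr 1
        refine Finset.sum_congr rfl (fun k hk => ?_)
        rw [hNP, hRP, map_mul, map_mul, map_pow, Polynomial.aeval_X, map_prod, map_prod]
        congr 1
        · congr 1
          · exact Finset.prod_congr rfl (fun j hj => by rw [map_sub, map_one, map_pow, Polynomial.aeval_X])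
          · exact Finset.prod_congr rfl (fun i hi => by rw [map_sub, map_one, map_pow, Polynomial.aeval_X])
      · rw [hDP, map_prod, auxD]
        congr 1
        exact Finset.prod_congr rfl (fun i hi => by rw [map_sub, map_one, map_pow, Polynomial.aeval_X])
    rw [haev]
    have hsum : ∑ k ∈ range (n-m+1),
        (∏ j ∈ range k, (1 - z^(2*m-1+2*j))) * (∏ i ∈ Ico (k+1) (n-m+1), (1 - z^i)) * z^(2*k)
        = (∑ k ∈ range (n-m+1), (∏ j ∈ range k, (1 - z^(2*m-1+2*j))) * z^(2*k) / auxD z k)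
            * auxD z (n-m) := by
      rw [Finset.sum_mul]
      refine Finset.sum_congr rfl (fun k hk => ?_)
      simp only [Finset.mem_range] at hk
      have hsplitz : auxD z k * (∏ i ∈ Ico (k+1) (n-m+1), (1-z^i)) = auxD z (n-m) := by
        rw [auxD, auxD, Finset.prod_Ico_consecutive _ (by omega) (by omega)]
      have hDkz : auxD z k ≠ 0 := auxD_ne z n hz2 k (by omega)
      rw [← hsplitz]
      rw [div_mul_eq_mul_div, eq_div_iff hDkz]
      ring
    rw [hsum]
    have hmain := aux_main z n m s hm1 hns hz1 hz2
    have h1 : z^(n*s+2*s) = z^(2*s) := by rw [pow_add, pow_mul, hz1, one_pow, one_mul]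
    have h2 : ((-1:K))^w = (-1)^s := by
      rw [show w = 2*(m-1)+s from by omega, pow_add, pow_mul, neg_one_sq, one_pow, one_mul]
    rw [h1, h2, pow_add, hz1]
    linear_combination (auxD z (n-m)) * hmain
  obtain ⟨u, hu⟩ := key3
  exact ⟨u, v, key2, by rw [key1, hu, pow_one]⟩
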